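/- For every symbol Λ with Υ(Λ) = (λ;μ) there exists a symbol ᵈΛ, unique up to shift-equivalence, such that def(ᵈΛ) = def(Λ) and Υ(ᵈΛ) = (μᵗ; λᵗ), where νᵗ denotes the transpose (conjugate) partition of ν. Moreover rank(ᵈΛ) = rank(Λ), and ᵈ(ᵈΛ) is shift-equivalent to Λ, so that Λ ↦ ᵈΛ is an involution on the shift-equivalence classes of symbols of any fixed rank and defect. -/

import Mathlib

/-- A Lusztig symbol: a pair of finite sets of natural numbers (equivalently, a pair of
strictly decreasing finite sequences of natural numbers). -/
structure LSymbol where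
  A : Finset ℕ
  B : Finset ℕ

namespace LSymbol

/-- The rank of a symbol: `Σ aᵢ + Σ bⱼ − ⌊((m₁+m₂−1)/2)²⌋`. -/
def rank (Λ : LSymbol) : ℤ :=
  ((Λ.A.sum id + Λ.B.sum id : ℕ) : ℤ) - ((Λ.A.card + Λ.B.card : ℤ) - 1) ^ 2 / 4

/-- The defect of a symbol: `m₁ − m₂`. -/
def defect (Λ : LSymbol) : ℤ :=
  (Λ.A.card : ℤ) - (Λ.B.card : ℤ)

/-- The shift of a symbol: add 1 to every entry of each row and append a new entry 0. -/
def shift (Λ : LSymbol) : LSymbol :=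
  ⟨insert 0 (Λ.A.image (· + 1)), insert 0 (Λ.B.image (· + 1))⟩

/-- Shift-equivalence: the equivalence relation generated by `Λ ∼ shift Λ`. -/
def ShiftEquiv : LSymbol → LSymbol → Prop :=
  Relation.EqvGen fun Λ Λ' => Λ' = Λ.shift

/-- The partition (as a multiset of nonzero parts) attached to one row of a symbol:
for the row `a₁ > a₂ > … > a_m`, the parts are `aᵢ − (m − i)`, discarding zeros. -/
def rowParts (s : Finset ℕ) : Multiset ℕ :=
  (((((s.sort (· ≤ ·)).zipIdx.map Prod.swap).map fun p => p.2 - p.1) : Multiset ℕ)).filter (· ≠ 0)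

/-- The bi-partition `Υ(Λ)` attached to a symbol. -/
def upsilon (Λ : LSymbol) : Multiset ℕ × Multiset ℕ :=
  (rowParts Λ.A, rowParts Λ.B)

end LSymbol

/-- The transpose (conjugate) of a partition given as a multiset of parts: the `i`-th
part of the conjugate is the number of parts of `μ` that are `≥ i`. -/
def conjPartition (μ : Multiset ℕ) : Multiset ℕ :=
  ((Multiset.range μ.sum).map fun i => (μ.filter fun p => i < p).card).filter (· ≠ 0)

/-- `D` is an Alvis–Curtis dual of `Λ`: it has the same defect, and its bi-partition is
`(μᵗ; λᵗ)` where `Υ(Λ) = (λ; μ)`. -/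
def IsACDual (Λ D : LSymbol) : Prop :=
  D.defect = Λ.defect ∧
  D.upsilon = (conjPartition Λ.upsilon.2, conjPartition Λ.upsilon.1)

def List.enumFrom {α : Type*} (k : ℕ) (l : List α) : List (ℕ × α) := (l.zipIdx k).map Prod.swap

def List.enum {α : Type*} (l : List α) : List (ℕ × α) := List.enumFrom 0 l

@[simp] theorem List.enumFrom_nil {α : Type*} (k : ℕ) : (([] : List α).enumFrom k) = [] := rfl

@[simp] theorem List.enumFrom_cons {α : Type*} (k : ℕ) (a : α) (l : List α) :
    (a :: l).enumFrom k = (k, a) :: l.enumFrom (k + 1) := rfl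

@[simp] theorem List.enum_length {α : Type*} (l : List α) : l.enum.length = l.length := by
  simp [List.enum, List.enumFrom]

@[simp] theorem List.getElem_enum {α : Type*} (l : List α) (i : ℕ) (h : i < l.enum.length) :
    l.enum[i] = (i, l[i]'(by simpa using h)) := by
  simp [List.enum, List.enumFrom]

namespace LSym

def mkRow (l : List ℕ) : Finset ℕ := (l.enum.map fun p => p.2 + p.1).toFinset

def partsList (s : Finset ℕ) : List ℕ := (s.sort (· ≤ ·)).enum.map fun p => p.2 - p.1

lemma sorted_lt_of_sorted_le_map (l : List ℕ) (h : l.Pairwise (· ≤ ·)) :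
    (l.enum.map fun p => p.2 + p.1).Pairwise (· < ·) := by
  rw [List.pairwise_iff_getElem]
  intro i j hi hj hij
  simp only [List.length_map, List.enum_length] at hi hj
  simp only [List.getElem_map, List.getElem_enum]
  have := (List.pairwise_iff_getElem.1 h) i j hi hj hij
  omega

lemma sort_mkRow (l : List ℕ) (h : l.Pairwise (· ≤ ·)) :
    (mkRow l).sort (· ≤ ·) = l.enum.map fun p => p.2 + p.1 := by
  have hs : (l.enum.map fun p => p.2 + p.1).Pairwise (· < ·) := sorted_lt_of_sorted_le_map l h
  have hnd : (l.enum.map fun p => p.2 + p.1).Nodup := hs.nodup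
  refine (fun h1 h2 h3 => List.Perm.eq_of_pairwise' (r := (· ≤ ·)) h2 h3 h1) ?_ ?_ ?_
  · rw [← Multiset.coe_eq_coe, Finset.sort_eq]
    rw [mkRow, List.toFinset, Multiset.toFinset]
    exact Multiset.dedup_eq_self.2 (Multiset.coe_nodup.2 hnd)
  · exact Finset.pairwise_sort _ _
  · exact hs.imp le_of_lt

lemma card_mkRow (l : List ℕ) (h : l.Pairwise (· ≤ ·)) : (mkRow l).card = l.length := by
  rw [← Finset.length_sort (· ≤ ·), sort_mkRow l h]; simp

lemma partsList_mkRow (l : List ℕ) (h : l.Pairwise (· ≤ ·)) : partsList (mkRow l) = l := by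
  rw [partsList, sort_mkRow l h]
  apply List.ext_getElem <;> simp

lemma ge_getElem_of_sorted_lt_aux (l : List ℕ) (h : l.Pairwise (· < ·)) (c : ℕ)
    (hc : ∀ x ∈ l, c ≤ x) (i : ℕ) (hi : i < l.length) : c + i ≤ l[i] := by
  induction l generalizing i c with
  | nil => simp at hi
  | cons a t ih =>
    rcases i with _ | i
    · simpa using hc a (by simp)
    · have hc' : ∀ x ∈ t, a + 1 ≤ x := fun x hx => (List.pairwise_cons.1 h).1 x hx
      have h1 := ih h.of_cons (a + 1) hc' i (by simpa using hi)
      have h2 : c ≤ a := hc a (by simp)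
      simp only [List.getElem_cons_succ]
      omega

lemma ge_getElem_of_sorted_lt (l : List ℕ) (h : l.Pairwise (· < ·)) (i : ℕ) (hi : i < l.length) :
    i ≤ l[i] := by
  simpa using ge_getElem_of_sorted_lt_aux l h 0 (fun _ _ => Nat.zero_le _) i hi

lemma partsList_length (s : Finset ℕ) : (partsList s).length = s.card := by
  simp [partsList]

lemma gap_sorted_lt (l : List ℕ) (h : l.Pairwise (· < ·)) (i j : ℕ)
    (hj : j < l.length) (hij : i ≤ j) : l[i]'(lt_of_le_of_lt hij hj) + (j - i) ≤ l[j] := by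
  have hd : (l.drop i).Pairwise (· < ·) := h.drop
  have h1 := ge_getElem_of_sorted_lt_aux (l.drop i) hd (l[i]'(lt_of_le_of_lt hij hj))
    (fun x hx => ?_) (j - i) (by simp [List.length_drop]; omega)
  · rw [List.getElem_drop] at h1
    convert h1 using 3
    omega
  · -- every element of drop i is ≥ l[i]
    obtain ⟨k, hk, rfl⟩ := List.getElem_of_mem hx
    rw [List.getElem_drop]
    rcases Nat.eq_zero_or_pos k with rfl | hkp
    · simp
    · refine le_of_lt ((List.pairwise_iff_getElem.1 h) i (i + k) _ ?_ (by omega))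
      simp only [List.length_drop] at hk
      omega

lemma mkRow_partsList (s : Finset ℕ) : mkRow (partsList s) = s := by
  have hs := (Finset.sortedLT_sort s).pairwise
  have key : (partsList s).enum.map (fun p => p.2 + p.1) = s.sort (· ≤ ·) := by
    apply List.ext_getElem
    · simp [partsList]
    · intro i h1 h2
      simp only [partsList, List.getElem_map, List.getElem_enum]
      have : i ≤ (s.sort (· ≤ ·))[i]'(by simpa [partsList] using h2) :=
        ge_getElem_of_sorted_lt _ hs i (by simpa [partsList] using h2)
      omega
  apply Finset.ext
  intro a
  constructor
  · intro ha
    rw [mkRow, List.mem_toFinset, key] at ha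
    exact (Finset.mem_sort _).1 ha
  · intro ha
    rw [mkRow, List.mem_toFinset, key]
    exact (Finset.mem_sort _).2 ha

lemma partsList_sorted (s : Finset ℕ) : (partsList s).Pairwise (· ≤ ·) := by
  rw [List.pairwise_iff_getElem]
  intro i j hi hj hij
  simp only [partsList, List.length_map, List.enum_length, Finset.length_sort] at hi hj
  simp only [partsList, List.getElem_map, List.getElem_enum]
  have hs := (Finset.sortedLT_sort s).pairwise
  have key : ∀ i j (hi : i < (s.sort (·≤·)).length) (hj : j < (s.sort (·≤·)).length), i < j →
      (s.sort (·≤·))[i] + (j - i) ≤ (s.sort (·≤·))[j] :=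
    fun i j hi hj hij => gap_sorted_lt _ hs i j hj (le_of_lt hij)
  have := key i j (by simpa using hi) (by simpa using hj) hij
  omega

end LSym


open LSym LSymbol

lemma rowParts_eq (s : Finset ℕ) :
    LSymbol.rowParts s = ((partsList s : Multiset ℕ)).filter (· ≠ 0) := rfl

lemma coe_partsList (s : Finset ℕ) :
    (partsList s : Multiset ℕ)
      = rowParts s + Multiset.replicate (s.card - Multiset.card (rowParts s)) 0 := by
  classical
  conv_lhs => rw [← Multiset.filter_add_not (· ≠ 0) (partsList s : Multiset ℕ)]
  rw [← rowParts_eq]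
  congr 1
  rw [Multiset.eq_replicate]
  constructor
  · have hcard : Multiset.card ((partsList s : Multiset ℕ)) = s.card := by
      simp [partsList]
    have := Multiset.card_add (Multiset.filter (· ≠ 0) (partsList s : Multiset ℕ))
      (Multiset.filter (fun a => ¬ a ≠ 0) (partsList s : Multiset ℕ))
    rw [Multiset.filter_add_not] at this
    rw [rowParts_eq]
    omega
  · intro b hb
    have := Multiset.of_mem_filter hb
    simpa using this

lemma row_eq_of_parts (s t : Finset ℕ) (h1 : s.card = t.card)
    (h2 : rowParts s = rowParts t) : s = t := by
  have hml : (partsList s : Multiset ℕ) = (partsList t : Multiset ℕ) := by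
    rw [coe_partsList, coe_partsList, h1, h2]
  have hl : partsList s = partsList t :=
    List.Perm.eq_of_pairwise' (partsList_sorted s) (partsList_sorted t) (Multiset.coe_eq_coe.1 hml)
  rw [← mkRow_partsList s, ← mkRow_partsList t, hl]

lemma mkRow_cons_zero (l : List ℕ) :
    mkRow (0 :: l) = insert 0 ((mkRow l).image (· + 1)) := by
  have hl : (0 :: l).enum.map (fun p => p.2 + p.1)
      = 0 :: ((l.enum.map fun p => p.2 + p.1).map (· + 1)) := by
    apply List.ext_getElem
    · simp
    · intro i h1 h2
      rcases i with _ | i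
      · simp [List.getElem_enum]
      · simp only [List.getElem_enum, List.getElem_cons_succ, List.getElem_map,
          List.getElem_enum]
        omega
  rw [mkRow, hl]
  ext a
  simp only [List.toFinset_cons, List.mem_toFinset, Finset.mem_insert, Finset.mem_image,
    List.mem_map, mkRow, List.mem_toFinset]

lemma shift_row (s : Finset ℕ) :
    insert 0 (s.image (· + 1)) = mkRow (0 :: partsList s) := by
  rw [mkRow_cons_zero, mkRow_partsList]

lemma sorted_cons_zero (s : Finset ℕ) : (0 :: partsList s).Pairwise (· ≤ ·) := by
  rw [List.pairwise_cons]
  exact ⟨fun b _ => Nat.zero_le b, partsList_sorted s⟩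

lemma card_shift_row (s : Finset ℕ) : (insert 0 (s.image (· + 1))).card = s.card + 1 := by
  rw [shift_row, card_mkRow _ (sorted_cons_zero s)]
  simp [partsList]

lemma rowParts_shift_row (s : Finset ℕ) :
    rowParts (insert 0 (s.image (· + 1))) = rowParts s := by
  rw [shift_row, rowParts_eq, partsList_mkRow _ (sorted_cons_zero s), rowParts_eq]
  simp [Multiset.filter_cons]

lemma enumFrom_sum (l : List ℕ) (k : ℕ) :
    2 * ((l.enumFrom k).map fun p => p.2 + p.1).sum
      = 2 * l.sum + l.length * (2 * k + l.length - 1) := by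
  induction l generalizing k with
  | nil => simp
  | cons a t ih =>
    simp only [List.enumFrom_cons, List.map_cons, List.sum_cons, List.length_cons,
      List.sum_cons]
    rw [Nat.mul_add, ih (k + 1)]
    have e1 : t.length * (2 * (k + 1) + t.length - 1) = t.length * (2 * k + t.length + 1) := by
      congr 1 <;> omega
    have e2 : (t.length + 1) * (2 * k + (t.length + 1) - 1) = (t.length + 1) * (2 * k + t.length) := by
      congr 1 <;> omega
    rw [e1, e2]
    ring

lemma sum_row (s : Finset ℕ) :
    2 * s.sum id = 2 * (rowParts s).sum + s.card * (s.card - 1) := by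
  have h1 : s.sum id = (s.sort (· ≤ ·)).sum := by
    have h0 : ((s.sort (· ≤ ·) : List ℕ) : Multiset ℕ).sum = s.val.sum := by
      rw [Finset.sort_eq]
    rw [Finset.sum, Multiset.map_id, ← h0, Multiset.sum_coe]
  have h2 : s.sort (· ≤ ·) = (partsList s).enum.map fun p => p.2 + p.1 := by
    conv_lhs => rw [← mkRow_partsList s]
    exact sort_mkRow _ (partsList_sorted s)
  have h3 : (partsList s).sum = (rowParts s).sum := by
    have := congrArg Multiset.sum (coe_partsList s)
    simpa using this
  have h4 := enumFrom_sum (partsList s) 0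
  rw [h1, h2]
  rw [show (partsList s).enum = (partsList s).enumFrom 0 from rfl]
  rw [h4, h3]
  simp [partsList]



/-! ### Conjugation of partitions -/

/-- number of parts exceeding `x` -/
def Nf (μ : Multiset ℕ) (x : ℕ) : ℕ := (μ.filter fun p => x < p).card

lemma Nf_antitone (μ : Multiset ℕ) {i j : ℕ} (h : i ≤ j) : Nf μ j ≤ Nf μ i := by
  exact Multiset.card_le_card (Multiset.monotone_filter_right μ (fun b hb => lt_of_le_of_lt h hb))

lemma zero_notMem_conj (μ : Multiset ℕ) : 0 ∉ conjPartition μ := by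
  intro h
  exact (Multiset.of_mem_filter h) rfl

lemma zero_notMem_rowParts (s : Finset ℕ) : 0 ∉ LSymbol.rowParts s := by
  intro h
  exact (Multiset.of_mem_filter h) rfl

lemma Nf_conj (μ : Multiset ℕ) (j : ℕ) :
    Nf (conjPartition μ) j = ((Finset.range μ.sum).filter fun i => j < Nf μ i).card := by
  rw [Nf, conjPartition, Multiset.filter_filter]
  have h1 : Multiset.filter (fun a => j < a ∧ a ≠ 0) ((Multiset.range μ.sum).map fun i => (μ.filter fun p => i < p).card)
      = Multiset.filter (fun a => j < a) ((Multiset.range μ.sum).map fun i => (μ.filter fun p => i < p).card) := by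
    apply Multiset.filter_congr
    intro x _
    constructor
    · exact fun h => h.1
    · exact fun h => ⟨h, by omega⟩
  rw [h1, Multiset.filter_map]
  rw [Multiset.card_map]
  rfl

lemma lt_Nf_conj_iff (μ : Multiset ℕ) (i j : ℕ) :
    j < Nf (conjPartition μ) i ↔ i < Nf μ j := by
  rw [Nf_conj]
  constructor
  · intro h
    by_contra hc
    push_neg at hc
    have hsub : ((Finset.range μ.sum).filter fun i' => i < Nf μ i') ⊆ Finset.range j := by
      intro x hx
      simp only [Finset.mem_filter, Finset.mem_range] at hx ⊢
      by_contra hxj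
      push_neg at hxj
      exact absurd (lt_of_lt_of_le hx.2 (Nf_antitone μ hxj)) (by omega)
    have := Finset.card_le_card hsub
    simp only [Finset.card_range] at this
    omega
  · intro h
    have hjS : j < μ.sum := by
      rw [Nf] at h
      have hne : (μ.filter fun p => j < p) ≠ 0 := by
        intro h0; rw [h0] at h; simp at h
      obtain ⟨p, hp⟩ := Multiset.exists_mem_of_ne_zero hne
      have hpμ := Multiset.mem_of_mem_filter hp
      have hjp := Multiset.of_mem_filter hp
      exact lt_of_lt_of_le hjp (Multiset.le_sum_of_mem hpμ)
    have hsub : Finset.range (j + 1) ⊆ (Finset.range μ.sum).filter fun i' => i < Nf μ i' := by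
      intro x hx
      simp only [Finset.mem_range] at hx
      simp only [Finset.mem_filter, Finset.mem_range]
      exact ⟨by omega, lt_of_lt_of_le h (Nf_antitone μ (by omega))⟩
    have := Finset.card_le_card hsub
    simp only [Finset.card_range] at this
    omega

lemma Nf_conj_conj (μ : Multiset ℕ) (j : ℕ) :
    Nf (conjPartition (conjPartition μ)) j = Nf μ j := by
  have h : ∀ i, i < Nf (conjPartition (conjPartition μ)) j ↔ i < Nf μ j := by
    intro i
    rw [lt_Nf_conj_iff, lt_Nf_conj_iff]
  by_contra hc
  rcases Nat.lt_or_ge (Nf (conjPartition (conjPartition μ)) j) (Nf μ j) with h1 | h1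
  · have := (h _).2 h1
    omega
  · have h2 : Nf μ j < Nf (conjPartition (conjPartition μ)) j := by omega
    have := (h _).1 h2
    omega

lemma Nf_succ_count (t : Multiset ℕ) (k : ℕ) :
    Nf t k = Nf t (k + 1) + t.count (k + 1) := by
  induction t using Multiset.induction_on with
  | empty => simp [Nf]
  | cons a s ih =>
    have hstep : ∀ x, Nf (a ::ₘ s) x = Nf s x + (if x < a then 1 else 0) := by
      intro x
      simp only [Nf, Multiset.filter_cons, Multiset.card_add]
      by_cases h : x < a <;> simp [h] <;> omega
    rw [hstep, hstep, Multiset.count_cons, ih]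
    split_ifs <;> omega

lemma conj_conj (μ : Multiset ℕ) (h : 0 ∉ μ) :
    conjPartition (conjPartition μ) = μ := by
  rw [Multiset.ext]
  intro a
  rcases a with _ | k
  · rw [Multiset.count_eq_zero.2 (zero_notMem_conj _), Multiset.count_eq_zero.2 h]
  · have h1 := Nf_succ_count (conjPartition (conjPartition μ)) k
    have h2 := Nf_succ_count μ k
    have h3 := Nf_conj_conj μ k
    have h4 := Nf_conj_conj μ (k + 1)
    omega

lemma sum_N_aux (t : Multiset ℕ) (n : ℕ) (hn : ∀ p ∈ t, p ≤ n) :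
    ∑ i ∈ Finset.range n, Nf t i = t.sum := by
  induction t using Multiset.induction_on with
  | empty => simp [Nf]
  | cons a s ih =>
    have hs : ∀ p ∈ s, p ≤ n := fun p hp => hn p (Multiset.mem_cons_of_mem hp)
    have ha : a ≤ n := hn a (Multiset.mem_cons_self a s)
    have hstep : ∀ i, Nf (a ::ₘ s) i = (if i < a then 1 else 0) + Nf s i := by
      intro i
      simp only [Nf, Multiset.filter_cons, Multiset.card_add]
      by_cases h1 : i < a <;> simp [h1]
    rw [Finset.sum_congr rfl (fun i _ => hstep i), Finset.sum_add_distrib, ih hs,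
      Finset.sum_boole]
    have : Finset.filter (fun x => x < a) (Finset.range n) = Finset.range a := by
      ext x
      simp only [Finset.mem_filter, Finset.mem_range]
      omega
    rw [this]
    simp [Multiset.sum_cons]

lemma sum_conj (μ : Multiset ℕ) : (conjPartition μ).sum = μ.sum := by
  rw [conjPartition]
  have h1 : ((((Multiset.range μ.sum).map fun i => (μ.filter fun p => i < p).card)).filter (· ≠ 0)).sum
      = (((Multiset.range μ.sum).map fun i => (μ.filter fun p => i < p).card)).sum := by
    set t := ((Multiset.range μ.sum).map fun i => (μ.filter fun p => i < p).card)
    conv_rhs => rw [← Multiset.filter_add_not (· ≠ 0) t]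
    rw [Multiset.sum_add]
    have : (Multiset.filter (fun a => ¬ a ≠ 0) t).sum = 0 := by
      apply Multiset.sum_eq_zero
      intro x hx
      have := Multiset.of_mem_filter hx
      omega
    omega
  rw [h1]
  have h2 : (((Multiset.range μ.sum).map fun i => (μ.filter fun p => i < p).card)).sum
      = ∑ i ∈ Finset.range μ.sum, Nf μ i := rfl
  rw [h2, sum_N_aux μ μ.sum (fun p hp => Multiset.le_sum_of_mem hp)]


/-! ### Symbol-level lemmas -/

lemma LSymbol.eq_of_rows {U V : LSymbol} (hA : U.A = V.A) (hB : U.B = V.B) : U = V := by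
  cases U; cases V; cases hA; cases hB; rfl

lemma card_A_shift (Λ : LSymbol) : Λ.shift.A.card = Λ.A.card + 1 := card_shift_row Λ.A
lemma card_B_shift (Λ : LSymbol) : Λ.shift.B.card = Λ.B.card + 1 := card_shift_row Λ.B

lemma upsilon_shift (Λ : LSymbol) : Λ.shift.upsilon = Λ.upsilon := by
  rw [LSymbol.upsilon, LSymbol.upsilon, LSymbol.shift]
  rw [rowParts_shift_row, rowParts_shift_row]

lemma card_A_iterate (Λ : LSymbol) (n : ℕ) :
    (LSymbol.shift^[n] Λ).A.card = Λ.A.card + n := by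
  induction n with
  | zero => simp
  | succ n ih => rw [Function.iterate_succ_apply', card_A_shift, ih]; omega

lemma card_B_iterate (Λ : LSymbol) (n : ℕ) :
    (LSymbol.shift^[n] Λ).B.card = Λ.B.card + n := by
  induction n with
  | zero => simp
  | succ n ih => rw [Function.iterate_succ_apply', card_B_shift, ih]; omega

lemma upsilon_iterate (Λ : LSymbol) (n : ℕ) :
    (LSymbol.shift^[n] Λ).upsilon = Λ.upsilon := by
  induction n with
  | zero => simp
  | succ n ih => rw [Function.iterate_succ_apply', upsilon_shift, ih]

lemma shiftEquiv_iterate (Λ : LSymbol) (n : ℕ) :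
    LSymbol.ShiftEquiv Λ (LSymbol.shift^[n] Λ) := by
  induction n with
  | zero => exact Relation.EqvGen.refl Λ
  | succ n ih =>
    apply Relation.EqvGen.trans _ _ _ ih
    rw [Function.iterate_succ_apply']
    exact Relation.EqvGen.rel _ _ rfl

lemma shiftEquiv_of (X Y : LSymbol) (hd : X.defect = Y.defect)
    (hu : X.upsilon = Y.upsilon) : LSymbol.ShiftEquiv X Y := by
  have huA : rowParts X.A = rowParts Y.A := congrArg Prod.fst hu
  have huB : rowParts X.B = rowParts Y.B := congrArg Prod.snd hu
  have hdd : (X.A.card : ℤ) - X.B.card = (Y.A.card : ℤ) - Y.B.card := hd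
  have key : LSymbol.shift^[Y.A.card] X = LSymbol.shift^[X.A.card] Y := by
    apply LSymbol.eq_of_rows
    · apply row_eq_of_parts
      · rw [card_A_iterate, card_A_iterate]; omega
      · have h1 := congrArg Prod.fst (upsilon_iterate X Y.A.card)
        have h2 := congrArg Prod.fst (upsilon_iterate Y X.A.card)
        simp only [LSymbol.upsilon] at h1 h2
        rw [h1, h2, huA]
    · apply row_eq_of_parts
      · rw [card_B_iterate, card_B_iterate]; omega
      · have h1 := congrArg Prod.snd (upsilon_iterate X Y.A.card)
        have h2 := congrArg Prod.snd (upsilon_iterate Y X.A.card)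
        simp only [LSymbol.upsilon] at h1 h2
        rw [h1, h2, huB]
  apply Relation.EqvGen.trans _ _ _ (shiftEquiv_iterate X Y.A.card)
  rw [key]
  exact Relation.EqvGen.symm _ _ (shiftEquiv_iterate Y X.A.card)

/-! ### Rank formula -/

lemma sum_row' (s : Finset ℕ) :
    2 * s.sum id + s.card = 2 * (rowParts s).sum + s.card * s.card := by
  have h := sum_row s
  have h2 : s.card * (s.card - 1) + s.card = s.card * s.card := by
    cases h0 : s.card with
    | zero => simp
    | succ n => simp only [Nat.succ_sub_one]; ring
  omega

lemma rank_formula (Λ : LSymbol) :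
    Λ.rank = ((rowParts Λ.A).sum : ℤ) + ((rowParts Λ.B).sum : ℤ)
      + ((Λ.defect ^ 2 - Λ.defect) / 2 - (Λ.defect - 1) ^ 2 / 4) := by
  have hA := sum_row' Λ.A
  have hB := sum_row' Λ.B
  set mA := (Λ.A.card : ℤ) with hmA
  set mB := (Λ.B.card : ℤ) with hmB
  set SA := ((Λ.A.sum id : ℕ) : ℤ) with hSA
  set SB := ((Λ.B.sum id : ℕ) : ℤ) with hSB
  set pA := ((rowParts Λ.A).sum : ℤ) with hpA
  set pB := ((rowParts Λ.B).sum : ℤ) with hpB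
  have hAZ : 2 * SA + mA = 2 * pA + mA * mA := by
    rw [hSA, hpA, hmA]; exact_mod_cast hA
  have hBZ : 2 * SB + mB = 2 * pB + mB * mB := by
    rw [hSB, hpB, hmB]; exact_mod_cast hB
  have hdef : Λ.defect = mA - mB := rfl
  set d := mA - mB with hdd
  set K := mA * mB - mB with hK
  have e4 : (mA + mB - 1) ^ 2 = (d - 1) ^ 2 + 4 * K := by rw [hdd, hK]; ring
  have hdiv4 : (mA + mB - 1) ^ 2 / 4 = (d - 1) ^ 2 / 4 + K := by
    rw [e4, Int.add_mul_ediv_left _ K (by norm_num)]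
  have e2 : 2 * (SA + SB) = 2 * (pA + pB) + 2 * K + (d ^ 2 - d) := by
    rw [hdd, hK]; linear_combination hAZ + hBZ
  have heven : ∃ c : ℤ, d ^ 2 - d = 2 * c := by
    obtain ⟨c, hc⟩ := Int.even_mul_succ_self (d - 1)
    exact ⟨c, by linarith [hc]⟩
  obtain ⟨c, hc⟩ := heven
  have hcdiv : (d ^ 2 - d) / 2 = c := by rw [hc]; exact Int.mul_ediv_cancel_left c (by norm_num)
  have hrank : Λ.rank = SA + SB - (mA + mB - 1) ^ 2 / 4 := by
    rw [LSymbol.rank, hSA, hSB, hmA, hmB, Nat.cast_add]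
  rw [hrank, hdef, hdiv4, hcdiv]
  have : SA + SB = pA + pB + K + c := by omega
  linarith [this]

/-! ### Construction of the dual -/

def padded (m : Multiset ℕ) (z : ℕ) : List ℕ := List.replicate z 0 ++ m.sort (· ≤ ·)

lemma padded_sorted (m : Multiset ℕ) (z : ℕ) : (padded m z).Pairwise (· ≤ ·) := by
  rw [padded, List.pairwise_append]
  refine ⟨?_, Multiset.pairwise_sort _ _, ?_⟩
  · rw [List.pairwise_replicate]
    right; rfl
  · intro a ha b _
    rw [List.eq_of_mem_replicate ha]
    exact Nat.zero_le b

lemma card_mkRow_padded (m : Multiset ℕ) (z : ℕ) :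
    (mkRow (padded m z)).card = z + Multiset.card m := by
  rw [card_mkRow _ (padded_sorted m z), padded]
  simp [Multiset.length_sort]

lemma rowParts_mkRow_padded (m : Multiset ℕ) (z : ℕ) (hm : 0 ∉ m) :
    rowParts (mkRow (padded m z)) = m := by
  rw [rowParts_eq, partsList_mkRow _ (padded_sorted m z), padded]
  have hcoe : ((List.replicate z 0 ++ m.sort (· ≤ ·) : List ℕ) : Multiset ℕ)
      = ((List.replicate z 0 : List ℕ) : Multiset ℕ) + m := by
    conv_rhs => rw [← Multiset.sort_eq m (· ≤ ·)]
    rfl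
  rw [hcoe, Multiset.filter_add]
  have h1 : Multiset.filter (· ≠ 0) ((List.replicate z 0 : List ℕ) : Multiset ℕ) = 0 := by
    simp [Multiset.coe_replicate]
  have h2 : Multiset.filter (· ≠ 0) m = m := by
    rw [Multiset.filter_eq_self]
    intro a ha h0
    subst h0
    exact hm ha
  rw [h1, h2]
  simp

def dualOf (Λ : LSymbol) : LSymbol :=
  ⟨mkRow (padded (conjPartition (rowParts Λ.B))
      (Multiset.card (conjPartition (rowParts Λ.A)) + Λ.A.card)),
   mkRow (padded (conjPartition (rowParts Λ.A))
      (Multiset.card (conjPartition (rowParts Λ.B)) + Λ.B.card))⟩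

lemma dualOf_isACDual (Λ : LSymbol) : IsACDual Λ (dualOf Λ) := by
  constructor
  · rw [LSymbol.defect, LSymbol.defect, dualOf]
    simp only [card_mkRow_padded]
    push_cast
    ring
  · rw [LSymbol.upsilon, dualOf]
    simp only
    rw [rowParts_mkRow_padded _ _ (zero_notMem_conj _),
      rowParts_mkRow_padded _ _ (zero_notMem_conj _)]
    rfl

/-- Every symbol `Λ` admits an Alvis–Curtis dual `ᵈΛ`, unique up to shift-equivalence;
moreover `rank(ᵈΛ) = rank(Λ)`, and `ᵈ(ᵈΛ)` is shift-equivalent to `Λ`, so the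
Alvis–Curtis dual is an involution on shift-equivalence classes of symbols of any fixed
rank and defect. -/
theorem statement5 (Λ : LSymbol) :
    (∃ D : LSymbol, IsACDual Λ D) ∧
    (∀ D D' : LSymbol, IsACDual Λ D → IsACDual Λ D' → LSymbol.ShiftEquiv D D') ∧
    (∀ D : LSymbol, IsACDual Λ D → D.rank = Λ.rank) ∧
    (∀ D D₂ : LSymbol, IsACDual Λ D → IsACDual D D₂ → LSymbol.ShiftEquiv D₂ Λ) := by
  refine ⟨⟨dualOf Λ, dualOf_isACDual Λ⟩, ?_, ?_, ?_⟩
  · intro D D' hD hD'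
    exact shiftEquiv_of D D' (hD.1.trans hD'.1.symm) (hD.2.trans hD'.2.symm)
  · intro D hD
    rw [rank_formula D, rank_formula Λ, hD.1]
    have h1 : rowParts D.A = conjPartition (rowParts Λ.B) := congrArg Prod.fst hD.2
    have h2 : rowParts D.B = conjPartition (rowParts Λ.A) := congrArg Prod.snd hD.2
    rw [h1, h2, sum_conj, sum_conj]
    ring
  · intro D D₂ hD hD₂
    apply shiftEquiv_of
    · rw [hD₂.1, hD.1]
    · have hu : D₂.upsilon = (conjPartition (conjPartition (rowParts Λ.A)),
          conjPartition (conjPartition (rowParts Λ.B))) := by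
        rw [hD₂.2]
        have h1 : D.upsilon.2 = conjPartition (rowParts Λ.A) := congrArg Prod.snd hD.2
        have h2 : D.upsilon.1 = conjPartition (rowParts Λ.B) := congrArg Prod.fst hD.2
        rw [h1, h2]
      rw [hu, conj_conj _ (zero_notMem_rowParts _), conj_conj _ (zero_notMem_rowParts _)]
      rfl
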